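/- For any fixed δ ∈ (0, 1/2] there exist constants C > 0 and c > 0 such that for all positive integers n, k, s satisfying k ≥ C·n^{1/2+δ}·s^{1/2−δ}, there exists a function Ext : {0,1}^n → {0,1}^m with output length m = ⌊n^c⌋ such that for every space-s source X over {0,1}^n with min-entropy at least k, the statistical distance between Ext(X) and the uniform distribution on {0,1}^m is at most 2^{−n^c}. -/

import Mathlib

open Finset

section Prelim

variable {α β : Type*}

/-- Min-entropy `H∞(X) = -log₂ max_x Pr[X = x]`. -/
noncomputable def minEntropy [Fintype α] (X : α → ℝ) : ℝ :=
  - Real.logb 2 (⨆ a, X a)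

/-- Statistical distance: `max_{S} |Pr[X ∈ S] - Pr[Y ∈ S]|`. -/
noncomputable def statDist [Fintype α] (X Y : α → ℝ) : ℝ :=
  ⨆ S : Finset α, |∑ a ∈ S, (X a - Y a)|

/-- The uniform distribution on a finite type. -/
noncomputable def uniformDist (α : Type*) [Fintype α] : α → ℝ :=
  fun _ => (Fintype.card α : ℝ)⁻¹

open Classical in
/-- Distribution of `f(X)` where `X` is distributed according to `X`. -/
noncomputable def pushforward [Fintype α] (X : α → ℝ) (f : α → β) : β → ℝ :=
  fun b => ∑ a, if f a = b then X a else 0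

/-- A width-`w`, length-`n` branching program source: a single start state, and for each
layer `i` and state, a probability distribution over (next state, output bit) pairs. -/
structure BPSource (w n : ℕ) where
  start : Fin w
  trans : ℕ → Fin w → Fin w → ZMod 2 → ℝ
  nonneg : ∀ i u v b, 0 ≤ trans i u v b
  sum_one : ∀ i u, ∑ v, ∑ b, trans i u v b = 1

/-- The probability that the random walk on the branching program outputs the string `x`. -/
noncomputable def BPSource.prob {w n : ℕ} (B : BPSource w n) (x : Fin n → ZMod 2) : ℝ :=
  ∑ path : Fin n → Fin w, ∏ i : Fin n,
    B.trans i.val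
      (if h : i.val = 0 then B.start else path ⟨i.val - 1, by have := i.isLt; omega⟩)
      (path i) (x i)

/-- A space-`s` source over `{0,1}ⁿ`: a distribution generated by a width-`2^s`,
length-`n` branching program source. -/
def IsSpaceSource (s n : ℕ) (X : (Fin n → ZMod 2) → ℝ) : Prop :=
  ∃ B : BPSource (2 ^ s) n, ∀ x, X x = B.prob x

end Prelim







lemma exp_le_quad {x : ℝ} (hx : |x| ≤ 1) : Real.exp x ≤ 1 + x + x ^ 2 := by
  have h := Real.exp_bound hx (n := 2) (by norm_num)
  have h2 : |Real.exp x - (1 + x)| ≤ x ^ 2 * (3 / (2*2)) := by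
    simpa [Finset.sum_range_succ, Nat.factorial] using h
  have := abs_le.1 h2
  
  nlinarith [this.2]

lemma prod_sub_prod_le {ι : Type*} (s : Finset ι) (f g : ι → ℝ)
    (h : ∀ i ∈ s, 0 ≤ g i ∧ g i ≤ f i ∧ f i ≤ 1) :
    ∏ i ∈ s, f i - ∏ i ∈ s, g i ≤ ∑ i ∈ s, (f i - g i) := by
  induction s using Finset.cons_induction with
  | empty => simp
  | cons a s ha ih =>
    have hs : ∀ i ∈ s, 0 ≤ g i ∧ g i ≤ f i ∧ f i ≤ 1 := fun i hi => h i (Finset.mem_cons_of_mem hi)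
    have ha' := h a (Finset.mem_cons_self a s)
    have hgf : ∏ i ∈ s, g i ≤ ∏ i ∈ s, f i :=
      Finset.prod_le_prod (fun i hi => (hs i hi).1) (fun i hi => (hs i hi).2.1)
    have hg1 : ∏ i ∈ s, g i ≤ 1 :=
      Finset.prod_le_one (fun i hi => (hs i hi).1) (fun i hi => (hs i hi).2.1.trans (hs i hi).2.2)
    have hg0 : 0 ≤ ∏ i ∈ s, g i := Finset.prod_nonneg (fun i hi => (hs i hi).1)
    rw [Finset.prod_cons, Finset.prod_cons, Finset.sum_cons]
    have ihs := ih hs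
    nlinarith [ha'.1, ha'.2.1, ha'.2.2]





noncomputable def probFun {w : ℕ} (n : ℕ) (T : ℕ → Fin w → Fin w → ZMod 2 → ℝ) (u0 : Fin w)
    (x : Fin n → ZMod 2) : ℝ :=
  ∑ path : Fin n → Fin w, ∏ i : Fin n,
    T i.val
      (if h : i.val = 0 then u0 else path ⟨i.val - 1, by have := i.isLt; omega⟩)
      (path i) (x i)

lemma sum_pi_cons {γ : Type*} [Fintype γ] {n : ℕ} (f : (Fin (n + 1) → γ) → ℝ) :
    ∑ q : Fin (n + 1) → γ, f q = ∑ q0 : γ, ∑ q' : Fin n → γ, f (Fin.cons q0 q') := by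
  rw [← (Fin.consEquiv (fun _ : Fin (n+1) => γ)).sum_comp f, Fintype.sum_prod_type]
  rfl

lemma cons_val_mk {γ : Type*} {n : ℕ} (p0 : γ) (p : Fin n → γ) (j : ℕ) (hj : j < n + 1) :
    (Fin.cons p0 p : Fin (n+1) → γ) ⟨j, hj⟩ = if h : j = 0 then p0 else p ⟨j - 1, by omega⟩ := by
  rcases j with _ | j
  · simp
  · rw [dif_neg (by omega)]
    have h1 : (⟨j + 1, hj⟩ : Fin (n + 1)) = Fin.succ ⟨j, by omega⟩ := rfl
    rw [h1, Fin.cons_succ]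
    rfl

lemma probFun_succ {w n : ℕ} (T : ℕ → Fin w → Fin w → ZMod 2 → ℝ) (u0 : Fin w)
    (x0 : ZMod 2) (x' : Fin n → ZMod 2) :
    probFun (n + 1) T u0 (Fin.cons x0 x')
      = ∑ p0 : Fin w, T 0 u0 p0 x0 * probFun n (fun j => T (j + 1)) p0 x' := by
  rw [probFun, sum_pi_cons]
  refine Finset.sum_congr rfl (fun p0 _ => ?_)
  rw [probFun, Finset.mul_sum]
  refine Finset.sum_congr rfl (fun path' _ => ?_)
  rw [Fin.prod_univ_succ]
  refine congrArg₂ (· * ·) (by simp) (Finset.prod_congr rfl fun i _ => ?_)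
  have hv : (Fin.succ i).val = i.val + 1 := rfl
  rw [dif_neg (by omega), Fin.cons_succ, Fin.cons_succ, cons_val_mk]
  rfl

lemma probFun_sum_one {w : ℕ} : ∀ (n : ℕ) (T : ℕ → Fin w → Fin w → ZMod 2 → ℝ),
    (∀ i u, ∑ v, ∑ b, T i u v b = 1) → ∀ u0 : Fin w,
    ∑ x : Fin n → ZMod 2, probFun n T u0 x = 1 := by
  intro n
  induction n with
  | zero =>
    intro T hT u0
    simp [probFun]
  | succ n ih =>
    intro T hT u0
    rw [sum_pi_cons (fun x => probFun (n+1) T u0 x)]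
    have hrec : ∀ x0 : ZMod 2, ∀ x' : Fin n → ZMod 2,
        probFun (n + 1) T u0 (Fin.cons x0 x')
          = ∑ p0 : Fin w, T 0 u0 p0 x0 * probFun n (fun j => T (j + 1)) p0 x' :=
      fun x0 x' => probFun_succ T u0 x0 x'
    calc ∑ x0 : ZMod 2, ∑ x' : Fin n → ZMod 2, probFun (n + 1) T u0 (Fin.cons x0 x')
        = ∑ x0 : ZMod 2, ∑ p0 : Fin w, T 0 u0 p0 x0
            * ∑ x' : Fin n → ZMod 2, probFun n (fun j => T (j + 1)) p0 x' := by
          refine Finset.sum_congr rfl (fun x0 _ => ?_)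
          simp_rw [hrec x0]
          rw [Finset.sum_comm]
          simp_rw [← Finset.mul_sum]
      _ = ∑ x0 : ZMod 2, ∑ p0 : Fin w, T 0 u0 p0 x0 := by
          refine Finset.sum_congr rfl (fun x0 _ => Finset.sum_congr rfl (fun p0 _ => ?_))
          rw [ih (fun j => T (j + 1)) (fun i u => hT (i + 1) u) p0, mul_one]
      _ = 1 := by rw [Finset.sum_comm]; exact hT 0 u0






open Classical in
lemma count_bad_le {V W : Type*} [Fintype V] [Fintype W] [Nonempty W]
    (c : V → ℝ) (χ : W → ℝ) (θ t : ℝ)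
    (hc0 : ∀ v, 0 ≤ c v) (hcθ : ∀ v, c v ≤ θ) (hcsum : ∑ v, c v ≤ 1)
    (hθ : 0 < θ) (ht : 0 < t) (ht1 : t ≤ 1)
    (hχ : ∀ y, |χ y| ≤ 1) (hχ0 : ∑ y, χ y = 0) :
    ((univ.filter fun g : V → W => t < ∑ v, c v * χ (g v)).card : ℝ)
      ≤ (Fintype.card (V → W) : ℝ) * Real.exp (-(t ^ 2 / (8 * θ))) := by
  classical
  set lam := t / (4 * θ) with hlam
  have hlpos : 0 < lam := by positivity
  have step1 : ((univ.filter fun g : V → W => t < ∑ v, c v * χ (g v)).card : ℝ)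
      ≤ ∑ g : V → W, Real.exp (lam * ((∑ v, c v * χ (g v)) - t)) := by
    have e1 : ((univ.filter fun g : V → W => t < ∑ v, c v * χ (g v)).card : ℝ)
        = ∑ g ∈ univ.filter fun g : V → W => t < ∑ v, c v * χ (g v), (1:ℝ) := by
      simp
    rw [e1]
    refine le_trans (Finset.sum_le_sum ?_)
      (Finset.sum_le_sum_of_subset_of_nonneg (Finset.filter_subset _ _) ?_)
    · intro g hg
      rw [Finset.mem_filter] at hg
      have h0 : (0:ℝ) ≤ lam * ((∑ v, c v * χ (g v)) - t) := by
        have := hg.2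
        nlinarith
      exact Real.one_le_exp h0
    · intro g _ _
      positivity
  have step2 : ∀ g : V → W, Real.exp (lam * ((∑ v, c v * χ (g v)) - t))
      = Real.exp (-(lam * t)) * ∏ v, Real.exp (lam * (c v * χ (g v))) := by
    intro g
    rw [← Real.exp_sum, ← Real.exp_add]
    congr 1
    rw [← Finset.mul_sum]
    ring
  have step3 : ∑ g : V → W, ∏ v, Real.exp (lam * (c v * χ (g v)))
      = ∏ v, ∑ y, Real.exp (lam * (c v * χ y)) := by
    rw [Fintype.prod_sum]
  have step4 : ∀ v, ∑ y, Real.exp (lam * (c v * χ y))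
      ≤ (Fintype.card W : ℝ) * Real.exp (lam ^ 2 * θ * c v) := by
    intro v
    have habs : ∀ y, |lam * (c v * χ y)| ≤ 1 := by
      intro y
      rw [abs_mul, abs_mul]
      have h1 : |lam| = lam := abs_of_pos hlpos
      have h2 : |c v| = c v := abs_of_nonneg (hc0 v)
      have h3 : lam * c v ≤ lam * θ := by
        apply mul_le_mul_of_nonneg_left (hcθ v) hlpos.le
      have h4 : lam * θ = t / 4 := by
        rw [hlam, div_mul_eq_mul_div, div_eq_div_iff (by positivity) (by norm_num)]
        ring
      have := hχ y
      rw [h1, h2]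
      calc lam * (c v * |χ y|) ≤ lam * (c v * 1) := by
            apply mul_le_mul_of_nonneg_left _ hlpos.le
            exact mul_le_mul_of_nonneg_left (hχ y) (hc0 v)
        _ = lam * c v := by ring
        _ ≤ t / 4 := by rw [← h4]; exact h3
        _ ≤ 1 := by linarith
    have hquad : ∀ y, Real.exp (lam * (c v * χ y))
        ≤ 1 + lam * (c v * χ y) + (lam * (c v * χ y)) ^ 2 :=
      fun y => exp_le_quad (habs y)
    have hsq : ∑ y, (lam * (c v * χ y)) ^ 2 ≤ (Fintype.card W : ℝ) * (lam * c v) ^ 2 := by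
      have : ∀ y ∈ univ, (lam * (c v * χ y)) ^ 2 ≤ (lam * c v) ^ 2 := by
        intro y _
        have h1 : (lam * (c v * χ y)) ^ 2 = (lam * c v) ^ 2 * (χ y) ^ 2 := by ring
        have h2 : (χ y) ^ 2 ≤ 1 := by
          rw [sq_le_one_iff_abs_le_one]
          exact hχ y
        nlinarith [sq_nonneg (lam * c v)]
      calc ∑ y, (lam * (c v * χ y)) ^ 2 ≤ ∑ _y : W, (lam * c v) ^ 2 :=
            Finset.sum_le_sum this
        _ = (Fintype.card W : ℝ) * (lam * c v) ^ 2 := by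
            rw [Finset.sum_const, Finset.card_univ, nsmul_eq_mul]
    calc ∑ y, Real.exp (lam * (c v * χ y))
        ≤ ∑ y, (1 + lam * (c v * χ y) + (lam * (c v * χ y)) ^ 2) :=
          Finset.sum_le_sum (fun y _ => hquad y)
      _ = (Fintype.card W : ℝ) + lam * c v * (∑ y, χ y) + ∑ y, (lam * (c v * χ y)) ^ 2 := by
          rw [Finset.sum_add_distrib, Finset.sum_add_distrib, Finset.sum_const,
            Finset.card_univ, nsmul_eq_mul, mul_one]
          congr 1
          congr 1
          rw [Finset.mul_sum]
          exact Finset.sum_congr rfl (fun y _ => by ring)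
      _ ≤ (Fintype.card W : ℝ) + 0 + (Fintype.card W : ℝ) * (lam * c v) ^ 2 := by
          rw [hχ0, mul_zero]
          linarith [hsq]
      _ = (Fintype.card W : ℝ) * (1 + (lam * c v) ^ 2) := by ring
      _ ≤ (Fintype.card W : ℝ) * Real.exp (lam ^ 2 * θ * c v) := by
          apply mul_le_mul_of_nonneg_left _ (Nat.cast_nonneg _)
          have h1 : (lam * c v) ^ 2 ≤ lam ^ 2 * θ * c v := by
            have : (lam * c v) ^ 2 = lam ^2 * c v * c v := by ring
            rw [this]
            have : lam ^ 2 * c v ≤ lam ^ 2 * θ := by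
              apply mul_le_mul_of_nonneg_left (hcθ v) (sq_nonneg lam)
            exact mul_le_mul_of_nonneg_right this (hc0 v)
          calc 1 + (lam * c v) ^ 2 ≤ 1 + lam ^ 2 * θ * c v := by linarith
            _ ≤ Real.exp (lam ^ 2 * θ * c v) := by
                have := Real.add_one_le_exp (lam ^ 2 * θ * c v)
                linarith
  have step5 : ∏ v, ((Fintype.card W : ℝ) * Real.exp (lam ^ 2 * θ * c v))
      = (Fintype.card (V → W) : ℝ) * Real.exp (lam ^ 2 * θ * ∑ v, c v) := by
    rw [Finset.prod_mul_distrib, Finset.prod_const, ← Real.exp_sum, Finset.card_univ,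
      Fintype.card_fun]
    push_cast
    congr 1
    rw [← Finset.mul_sum]
  have hfinal : ((univ.filter fun g : V → W => t < ∑ v, c v * χ (g v)).card : ℝ)
      ≤ (Fintype.card (V → W) : ℝ) * Real.exp (lam ^ 2 * θ - lam * t) := by
    calc ((univ.filter fun g : V → W => t < ∑ v, c v * χ (g v)).card : ℝ)
        ≤ ∑ g : V → W, Real.exp (lam * ((∑ v, c v * χ (g v)) - t)) := step1
      _ = Real.exp (-(lam * t)) * ∑ g : V → W, ∏ v, Real.exp (lam * (c v * χ (g v))) := by
          rw [Finset.mul_sum]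
          exact Finset.sum_congr rfl (fun g _ => step2 g)
      _ = Real.exp (-(lam * t)) * ∏ v, ∑ y, Real.exp (lam * (c v * χ y)) := by rw [step3]
      _ ≤ Real.exp (-(lam * t)) * ∏ v, ((Fintype.card W : ℝ) * Real.exp (lam ^ 2 * θ * c v)) := by
          apply mul_le_mul_of_nonneg_left _ (Real.exp_nonneg _)
          refine Finset.prod_le_prod (fun v _ => ?_) (fun v _ => step4 v)
          positivity
      _ = Real.exp (-(lam * t)) * ((Fintype.card (V → W) : ℝ)
            * Real.exp (lam ^ 2 * θ * ∑ v, c v)) := by rw [step5]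
      _ ≤ Real.exp (-(lam * t)) * ((Fintype.card (V → W) : ℝ) * Real.exp (lam ^ 2 * θ * 1)) := by
          apply mul_le_mul_of_nonneg_left _ (Real.exp_nonneg _)
          apply mul_le_mul_of_nonneg_left _ (Nat.cast_nonneg _)
          apply Real.exp_le_exp.2
          apply mul_le_mul_of_nonneg_left hcsum (by positivity)
      _ = (Fintype.card (V → W) : ℝ) * Real.exp (lam ^ 2 * θ - lam * t) := by
          rw [mul_one, ← mul_assoc, mul_comm (Real.exp _) _, mul_assoc, ← Real.exp_add]
          congr 2
          ring
  refine hfinal.trans ?_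
  apply mul_le_mul_of_nonneg_left _ (Nat.cast_nonneg _)
  apply Real.exp_le_exp.2
  have : lam ^ 2 * θ - lam * t = -(3 * t ^ 2 / (16 * θ)) := by
    rw [hlam]
    field_simp
    ring
  rw [this]
  rw [neg_le_neg_iff]
  rw [div_le_div_iff₀ (by positivity) (by positivity)]
  nlinarith [sq_nonneg t, hθ]




section
variable {V W : Type*} [Fintype V] [Fintype W] [Nonempty W]

open Classical in
lemma exists_good_coloring
    (Qs : Finset (V → ℝ)) (θ t : ℝ) (hθ : 0 < θ) (ht : 0 < t) (ht1 : t ≤ 1)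
    (hQ : ∀ Q ∈ Qs, (∀ v, 0 ≤ Q v) ∧ (∀ v, Q v ≤ θ) ∧ (∑ v, Q v) ≤ 1)
    (hcb : ∀ (c : V → ℝ) (χ : W → ℝ), (∀ v, 0 ≤ c v) → (∀ v, c v ≤ θ) → (∑ v, c v ≤ 1) →
      (∀ y, |χ y| ≤ 1) → (∑ y, χ y = 0) →
      ((univ.filter fun g : V → W => t < ∑ v, c v * χ (g v)).card : ℝ)
        ≤ (Fintype.card (V → W) : ℝ) * Real.exp (-(t ^ 2 / (8 * θ))))
    (hcard : (Qs.card : ℝ) * (2 * (Fintype.card W : ℝ)) * Real.exp (-(t ^ 2 / (8 * θ))) < 1) :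
    ∃ g : V → W, ∀ Q ∈ Qs, ∀ b : W,
      |∑ v, Q v * ((if g v = b then (1:ℝ) else 0) - (Fintype.card W : ℝ)⁻¹)| ≤ t := by
  classical
  set M : ℝ := (Fintype.card W : ℝ) with hM
  have hM1 : (1:ℝ) ≤ M := by
    rw [hM]
    exact_mod_cast Fintype.card_pos
  set χ : W → W → ℝ := fun b y => (if y = b then (1:ℝ) else 0) - M⁻¹ with hχdef
  have hχabs : ∀ b y, |χ b y| ≤ 1 := by
    intro b y
    rw [hχdef]
    have h1 : (0:ℝ) < M⁻¹ := by positivity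
    have h2 : M⁻¹ ≤ 1 := by
      rw [inv_le_one_iff₀]; right; exact hM1
    by_cases h : y = b <;> simp only [h, ↓reduceIte, if_true] <;> rw [abs_le] <;> constructor <;> linarith
  have hχ0 : ∀ b, ∑ y, χ b y = 0 := by
    intro b
    rw [hχdef]
    simp only [Finset.sum_sub_distrib, Finset.sum_ite_eq', Finset.mem_univ, if_true,
      Finset.sum_const, Finset.card_univ, nsmul_eq_mul]
    rw [← hM]
    field_simp
    norm_num
  set bad : Finset (V → W) :=
    univ.filter (fun g => ∃ Q ∈ Qs, ∃ b : W, t < |∑ v, Q v * χ b (g v)|) with hbad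
  have hsub : bad ⊆ (Qs ×ˢ (univ : Finset W)).biUnion
      (fun p => (univ.filter fun g : V → W => t < ∑ v, p.1 v * χ p.2 (g v))
        ∪ (univ.filter fun g : V → W => t < ∑ v, p.1 v * (-(χ p.2 (g v))))) := by
    intro g hg
    rw [hbad, Finset.mem_filter] at hg
    obtain ⟨-, Q, hQmem, b, hb⟩ := hg
    rw [Finset.mem_biUnion]
    refine ⟨(Q, b), Finset.mem_product.2 ⟨hQmem, Finset.mem_univ _⟩, ?_⟩
    rw [Finset.mem_union, Finset.mem_filter, Finset.mem_filter]
    rcases lt_abs.1 hb with h | h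
    · exact Or.inl ⟨Finset.mem_univ _, h⟩
    · refine Or.inr ⟨Finset.mem_univ _, ?_⟩
      have heq : ∑ v, Q v * -(χ b (g v)) = -∑ v, Q v * χ b (g v) := by
        rw [← Finset.sum_neg_distrib]
        exact Finset.sum_congr rfl (fun v _ => by ring)
      show t < ∑ v, Q v * -(χ b (g v))
      rw [heq]
      exact h
  have hcardbad : (bad.card : ℝ)
      ≤ (Qs.card : ℝ) * (2 * M) * ((Fintype.card (V → W) : ℝ) * Real.exp (-(t ^ 2 / (8 * θ)))) := by
    have h1 := Finset.card_le_card hsub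
    have h2 := Finset.card_biUnion_le (s := Qs ×ˢ (univ : Finset W))
      (t := fun p => (univ.filter fun g : V → W => t < ∑ v, p.1 v * χ p.2 (g v))
        ∪ (univ.filter fun g : V → W => t < ∑ v, p.1 v * (-(χ p.2 (g v)))))
    have h3 : ∀ p ∈ Qs ×ˢ (univ : Finset W),
        (((univ.filter fun g : V → W => t < ∑ v, p.1 v * χ p.2 (g v))
          ∪ (univ.filter fun g : V → W => t < ∑ v, p.1 v * (-(χ p.2 (g v))))).card : ℝ)
        ≤ 2 * ((Fintype.card (V → W) : ℝ) * Real.exp (-(t ^ 2 / (8 * θ)))) := by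
      intro p hp
      obtain ⟨hp1, -⟩ := Finset.mem_product.1 hp
      obtain ⟨hQ0, hQθ, hQsum⟩ := hQ p.1 hp1
      have c1 := hcb p.1 (χ p.2) hQ0 hQθ hQsum (hχabs p.2) (hχ0 p.2)
      have c2 := hcb p.1 (fun y => -(χ p.2 y)) hQ0 hQθ hQsum
        (fun y => by rw [abs_neg]; exact hχabs p.2 y)
        (by rw [Finset.sum_neg_distrib, hχ0 p.2, neg_zero])
      have := Finset.card_union_le
        (univ.filter fun g : V → W => t < ∑ v, p.1 v * χ p.2 (g v))
        (univ.filter fun g : V → W => t < ∑ v, p.1 v * (-(χ p.2 (g v))))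
      have hcast : ((_ ∪ _ : Finset (V → W)).card : ℝ) ≤ _ := Nat.cast_le.2 this
      refine hcast.trans ?_
      push_cast
      linarith
    calc (bad.card : ℝ) ≤ ((Qs ×ˢ (univ : Finset W)).biUnion _).card := Nat.cast_le.2 h1
      _ ≤ ∑ p ∈ Qs ×ˢ (univ : Finset W), (((univ.filter fun g : V → W => t < ∑ v, p.1 v * χ p.2 (g v))
          ∪ (univ.filter fun g : V → W => t < ∑ v, p.1 v * (-(χ p.2 (g v))))).card : ℝ) := by
          exact_mod_cast Nat.cast_le.2 h2
      _ ≤ ∑ _p ∈ Qs ×ˢ (univ : Finset W),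
            2 * ((Fintype.card (V → W) : ℝ) * Real.exp (-(t ^ 2 / (8 * θ)))) :=
          Finset.sum_le_sum h3
      _ = (Qs.card : ℝ) * (2 * M) * ((Fintype.card (V → W) : ℝ) * Real.exp (-(t ^ 2 / (8 * θ)))) := by
          rw [Finset.sum_const, Finset.card_product, Finset.card_univ, nsmul_eq_mul]
          push_cast
          ring
  have hlt : (bad.card : ℝ) < (Fintype.card (V → W) : ℝ) := by
    have hN : (0:ℝ) < (Fintype.card (V → W) : ℝ) := by
      exact_mod_cast Fintype.card_pos
    calc (bad.card : ℝ) ≤ (Qs.card : ℝ) * (2 * M)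
          * ((Fintype.card (V → W) : ℝ) * Real.exp (-(t ^ 2 / (8 * θ)))) := hcardbad
      _ = ((Qs.card : ℝ) * (2 * M) * Real.exp (-(t ^ 2 / (8 * θ))))
          * (Fintype.card (V → W) : ℝ) := by ring
      _ < 1 * (Fintype.card (V → W) : ℝ) := by
          exact mul_lt_mul_of_pos_right hcard hN
      _ = (Fintype.card (V → W) : ℝ) := one_mul _
  have hne : bad ≠ univ := by
    intro h
    rw [h, Finset.card_univ] at hlt
    exact lt_irrefl _ hlt
  obtain ⟨g, -, hgbad⟩ := Finset.exists_of_ssubset (Finset.ssubset_univ_iff.2 hne)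
  refine ⟨g, fun Q hQmem b => ?_⟩
  by_contra hcon
  push_neg at hcon
  exact hgbad (by
    rw [hbad, Finset.mem_filter]
    exact ⟨Finset.mem_univ _, Q, hQmem, b, hcon⟩)
end





lemma entropy_facts {n : ℕ} (X : (Fin n → ZMod 2) → ℝ) (hnn : ∀ x, 0 ≤ X x)
    (hsum : ∑ x, X x = 1) {k : ℕ} (hk : (k : ℝ) ≤ minEntropy X) :
    (∀ x, X x ≤ (2:ℝ) ^ (-(k:ℝ))) ∧ k ≤ n := by
  have hbdd : BddAbove (Set.range X) := Set.Finite.bddAbove (Set.finite_range X)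
  have hxle : ∀ x, X x ≤ ⨆ y, X y := fun x => le_ciSup hbdd x
  have hcard : (Fintype.card (Fin n → ZMod 2) : ℝ) = 2 ^ n := by
    simp [Fintype.card_fun]
  have hsup_ge : ((2:ℝ) ^ n)⁻¹ ≤ ⨆ y, X y := by
    have h1 : (1:ℝ) ≤ (2:ℝ) ^ n * ⨆ y, X y := by
      calc (1:ℝ) = ∑ x, X x := hsum.symm
        _ ≤ ∑ _x : Fin n → ZMod 2, ⨆ y, X y := Finset.sum_le_sum (fun x _ => hxle x)
        _ = (2:ℝ) ^ n * ⨆ y, X y := by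
            rw [Finset.sum_const, Finset.card_univ, nsmul_eq_mul, hcard]
    rw [inv_le_iff_one_le_mul₀ (by positivity)]
    linarith
  have hsup_pos : 0 < ⨆ y, X y := lt_of_lt_of_le (by positivity) hsup_ge
  have hlogb : Real.logb 2 (⨆ y, X y) ≤ -(k:ℝ) := by
    have : (k:ℝ) ≤ -Real.logb 2 (⨆ y, X y) := hk
    linarith
  have hsup_le : (⨆ y, X y) ≤ (2:ℝ) ^ (-(k:ℝ)) := by
    have h1 : (2:ℝ) ^ Real.logb 2 (⨆ y, X y) = ⨆ y, X y :=
      Real.rpow_logb (by norm_num) (by norm_num) hsup_pos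
    calc (⨆ y, X y) = (2:ℝ) ^ Real.logb 2 (⨆ y, X y) := h1.symm
      _ ≤ (2:ℝ) ^ (-(k:ℝ)) := Real.rpow_le_rpow_of_exponent_le (by norm_num) hlogb
  constructor
  · exact fun x => (hxle x).trans hsup_le
  · have h2 : (2:ℝ) ^ (-(n:ℝ)) ≤ (2:ℝ) ^ (-(k:ℝ)) := by
      calc (2:ℝ) ^ (-(n:ℝ)) = ((2:ℝ) ^ n)⁻¹ := by
            rw [Real.rpow_neg (by norm_num), Real.rpow_natCast]
        _ ≤ ⨆ y, X y := hsup_ge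
        _ ≤ (2:ℝ) ^ (-(k:ℝ)) := hsup_le
    have h3 : -(n:ℝ) ≤ -(k:ℝ) := by
      exact (Real.rpow_le_rpow_left_iff (by norm_num)).1 h2
    have : (k:ℝ) ≤ (n:ℝ) := by linarith
    exact_mod_cast this

-- rounding
lemma floor_le_pow {a : ℕ} {r : ℝ} (h0 : 0 ≤ r) (h1 : r ≤ 1) : ⌊r * 2 ^ a⌋₊ ≤ 2 ^ a := by
  have : r * 2 ^ a ≤ (2:ℝ) ^ a := by nlinarith [pow_pos (by norm_num : (0:ℝ) < 2) a]
  calc ⌊r * 2 ^ a⌋₊ ≤ ⌊(2:ℝ) ^ a⌋₊ := Nat.floor_le_floor this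
    _ = 2 ^ a := by
      rw [show ((2:ℝ) ^ a) = ((2 ^ a : ℕ) : ℝ) by push_cast; ring, Nat.floor_natCast]

lemma rnd_le {a : ℕ} {r : ℝ} (h0 : 0 ≤ r) :
    (⌊r * 2 ^ a⌋₊ : ℝ) / 2 ^ a ≤ r := by
  rw [div_le_iff₀ (by positivity)]
  exact Nat.floor_le (by positivity)

lemma le_round_add {a : ℕ} {r : ℝ} (h0 : 0 ≤ r) :
    r - (⌊r * 2 ^ a⌋₊ : ℝ) / 2 ^ a ≤ ((2:ℝ) ^ a)⁻¹ := by
  have h1 : r * 2 ^ a < (⌊r * 2 ^ a⌋₊ : ℝ) + 1 := Nat.lt_floor_add_one _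
  have h2 : (0:ℝ) < 2 ^ a := by positivity
  rw [sub_le_iff_le_add, inv_eq_one_div, ← add_div, le_div_iff₀ h2]
  linarith




section approx
variable {w n a : ℕ}

lemma BP_entry_le_one (B : BPSource w n) (i : ℕ) (u v : Fin w) (b : ZMod 2) :
    B.trans i u v b ≤ 1 := by
  have h1 : B.trans i u v b ≤ ∑ b' : ZMod 2, B.trans i u v b' :=
    Finset.single_le_sum (fun b' _ => B.nonneg i u v b') (Finset.mem_univ b)
  have h2 : ∑ b' : ZMod 2, B.trans i u v b' ≤ ∑ v' : Fin w, ∑ b' : ZMod 2, B.trans i u v' b' :=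
    Finset.single_le_sum (f := fun v' => ∑ b' : ZMod 2, B.trans i u v' b')
      (fun v' _ => Finset.sum_nonneg (fun b' _ => B.nonneg i u v' b')) (Finset.mem_univ v)
  calc B.trans i u v b ≤ _ := h1
    _ ≤ _ := h2
    _ = 1 := B.sum_one i u

noncomputable def Tof (n a : ℕ) {w : ℕ} (τ : Fin n → Fin w → Fin w → ZMod 2 → Fin (2 ^ a + 1)) :
    ℕ → Fin w → Fin w → ZMod 2 → ℝ :=
  fun i u v b => if h : i < n then ((τ ⟨i, h⟩ u v b : ℕ) : ℝ) / 2 ^ a else 0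

noncomputable def roundTbl (B : BPSource w n) (a : ℕ) :
    Fin n → Fin w → Fin w → ZMod 2 → Fin (2 ^ a + 1) :=
  fun i u v b => ⟨⌊B.trans i.val u v b * 2 ^ a⌋₊,
    Nat.lt_succ_of_le (floor_le_pow (B.nonneg _ _ _ _) (BP_entry_le_one B _ _ _ _))⟩

lemma prob_eq_probFun (B : BPSource w n) : B.prob = probFun n B.trans B.start := rfl

lemma approx_facts (B : BPSource w n) (x : Fin n → ZMod 2) :
    0 ≤ probFun n (Tof n a (roundTbl B a)) B.start x ∧
    probFun n (Tof n a (roundTbl B a)) B.start x ≤ B.prob x ∧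
    B.prob x - probFun n (Tof n a (roundTbl B a)) B.start x
      ≤ (Fintype.card (Fin n → Fin w) : ℝ) * (n * ((2:ℝ) ^ a)⁻¹) := by
  have key : ∀ path : Fin n → Fin w, ∀ i : Fin n,
      Tof n a (roundTbl B a) i.val
        (if h : i.val = 0 then B.start else path ⟨i.val - 1, by have := i.isLt; omega⟩)
        (path i) (x i)
      = (⌊B.trans i.val
          (if h : i.val = 0 then B.start else path ⟨i.val - 1, by have := i.isLt; omega⟩)
          (path i) (x i) * 2 ^ a⌋₊ : ℝ) / 2 ^ a := by
    intro path i
    rw [Tof, dif_pos i.isLt]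
    congr 1
  -- pointwise facts about the factors
  have hfact : ∀ (r : ℝ), 0 ≤ r → r ≤ 1 →
      0 ≤ (⌊r * 2 ^ a⌋₊ : ℝ) / 2 ^ a ∧ (⌊r * 2 ^ a⌋₊ : ℝ) / 2 ^ a ≤ r ∧
        r - (⌊r * 2 ^ a⌋₊ : ℝ) / 2 ^ a ≤ ((2:ℝ) ^ a)⁻¹ := by
    intro r h0 h1
    exact ⟨by positivity, rnd_le h0, le_round_add h0⟩
  rw [prob_eq_probFun, probFun, probFun]
  refine ⟨Finset.sum_nonneg (fun path _ => Finset.prod_nonneg (fun i _ => ?_)), ?_, ?_⟩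
  · rw [key path i]
    positivity
  · refine Finset.sum_le_sum (fun path _ => ?_)
    refine Finset.prod_le_prod (fun i _ => ?_) (fun i _ => ?_)
    · rw [key path i]; positivity
    · rw [key path i]
      exact rnd_le (B.nonneg _ _ _ _)
  · rw [← Finset.sum_sub_distrib]
    have hpath : ∀ path : Fin n → Fin w,
        (∏ i : Fin n, B.trans i.val
            (if h : i.val = 0 then B.start else path ⟨i.val - 1, by have := i.isLt; omega⟩)
            (path i) (x i))
          - (∏ i : Fin n, Tof n a (roundTbl B a) i.val
            (if h : i.val = 0 then B.start else path ⟨i.val - 1, by have := i.isLt; omega⟩)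
            (path i) (x i))
        ≤ (n : ℝ) * ((2:ℝ) ^ a)⁻¹ := by
      intro path
      have h1 := prod_sub_prod_le Finset.univ
        (fun i : Fin n => B.trans i.val
            (if h : i.val = 0 then B.start else path ⟨i.val - 1, by have := i.isLt; omega⟩)
            (path i) (x i))
        (fun i : Fin n => Tof n a (roundTbl B a) i.val
            (if h : i.val = 0 then B.start else path ⟨i.val - 1, by have := i.isLt; omega⟩)
            (path i) (x i))
        (fun i _ => by
          simp only [key path i]
          exact ⟨by positivity, rnd_le (B.nonneg _ _ _ _), BP_entry_le_one B _ _ _ _⟩)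
      refine h1.trans ?_
      calc ∑ i : Fin n, _ ≤ ∑ _i : Fin n, ((2:ℝ) ^ a)⁻¹ := by
            refine Finset.sum_le_sum (fun i _ => ?_)
            simp only [key path i]
            exact le_round_add (B.nonneg _ _ _ _)
        _ = (n : ℝ) * ((2:ℝ) ^ a)⁻¹ := by
            rw [Finset.sum_const, Finset.card_univ, Fintype.card_fin, nsmul_eq_mul]
    calc ∑ path : Fin n → Fin w, _ ≤ ∑ _path : Fin n → Fin w, (n : ℝ) * ((2:ℝ) ^ a)⁻¹ :=
          Finset.sum_le_sum (fun path _ => hpath path)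
      _ = (Fintype.card (Fin n → Fin w) : ℝ) * ((n : ℝ) * ((2:ℝ) ^ a)⁻¹) := by
          rw [Finset.sum_const, Finset.card_univ, nsmul_eq_mul]

end approx




lemma arith_pack {δ : ℝ} (hδ0 : 0 < δ) (hδ2 : δ ≤ 1/2) {n k s : ℕ}
    (hn : 0 < n) (hk : 0 < k) (hs : 0 < s) (hkn : k ≤ n)
    (hineq : (2:ℝ) ^ (40:ℕ) * (n:ℝ) ^ ((1:ℝ)/2 + δ) * (s:ℝ) ^ ((1:ℝ)/2 - δ) ≤ (k:ℝ)) :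
    (2:ℝ) ^ (40:ℕ) * (n:ℝ) ^ ((1:ℝ)/2) ≤ (k:ℝ) ∧ 4 * (s:ℝ) ≤ (k:ℝ) := by
  have hn1 : (1:ℝ) ≤ (n:ℝ) := by exact_mod_cast hn
  have hk1 : (1:ℝ) ≤ (k:ℝ) := by exact_mod_cast hk
  have hs1 : (1:ℝ) ≤ (s:ℝ) := by exact_mod_cast hs
  have hknR : (k:ℝ) ≤ (n:ℝ) := by exact_mod_cast hkn
  have hse : (0:ℝ) ≤ (1:ℝ)/2 - δ := by linarith
  have hs_pow1 : (1:ℝ) ≤ (s:ℝ) ^ ((1:ℝ)/2 - δ) := by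
    calc (1:ℝ) = (1:ℝ) ^ ((1:ℝ)/2 - δ) := (Real.one_rpow _).symm
      _ ≤ (s:ℝ) ^ ((1:ℝ)/2 - δ) := Real.rpow_le_rpow (by norm_num) hs1 hse
  have hmain : (2:ℝ) ^ (40:ℕ) * (n:ℝ) ^ ((1:ℝ)/2) ≤ (k:ℝ) := by
    have h1 : (n:ℝ) ^ ((1:ℝ)/2) ≤ (n:ℝ) ^ ((1:ℝ)/2 + δ) :=
      Real.rpow_le_rpow_of_exponent_le hn1 (by linarith)
    have h2 : (2:ℝ) ^ (40:ℕ) * (n:ℝ) ^ ((1:ℝ)/2) ≤ (2:ℝ) ^ (40:ℕ) * (n:ℝ) ^ ((1:ℝ)/2 + δ) := by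
      apply mul_le_mul_of_nonneg_left h1 (by positivity)
    have h3 : (2:ℝ) ^ (40:ℕ) * (n:ℝ) ^ ((1:ℝ)/2 + δ)
        ≤ (2:ℝ) ^ (40:ℕ) * (n:ℝ) ^ ((1:ℝ)/2 + δ) * (s:ℝ) ^ ((1:ℝ)/2 - δ) := by
      nlinarith [hs_pow1, Real.rpow_nonneg (by positivity : (0:ℝ) ≤ (n:ℝ)) ((1:ℝ)/2 + δ),
        pow_pos (by norm_num : (0:ℝ) < 2) 40]
    linarith
  refine ⟨hmain, ?_⟩
  rcases eq_or_lt_of_le hδ2 with heq | hlt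
  · -- δ = 1/2 : contradiction with k ≤ n
    exfalso
    have e1 : (1:ℝ)/2 + δ = 1 := by rw [heq]; norm_num
    have e2 : (1:ℝ)/2 - δ = 0 := by rw [heq]; norm_num
    rw [e1, e2, Real.rpow_one, Real.rpow_zero, mul_one] at hineq
    nlinarith [hineq, hn1, hknR]
  · -- δ < 1/2
    set e : ℝ := (1:ℝ)/2 - δ with he_def
    have he : 0 < e := by rw [he_def]; linarith
    set β : ℝ := e⁻¹ with hβ_def
    have hβpos : 0 < β := by positivity
    have heβ : e * β = 1 := mul_inv_cancel₀ he.ne'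
    have hβ2 : 2 ≤ β := by
      rw [hβ_def]
      rw [le_inv_comm₀ (by norm_num) he]
      rw [he_def]; linarith
    have hD : (0:ℝ) < (2:ℝ) ^ (40:ℕ) * (n:ℝ) ^ ((1:ℝ)/2 + δ) := by positivity
    have h1 : (s:ℝ) ^ e ≤ (k:ℝ) / ((2:ℝ) ^ (40:ℕ) * (n:ℝ) ^ ((1:ℝ)/2 + δ)) := by
      rw [le_div_iff₀ hD]
      calc (s:ℝ) ^ e * ((2:ℝ) ^ (40:ℕ) * (n:ℝ) ^ ((1:ℝ)/2 + δ))
          = (2:ℝ) ^ (40:ℕ) * (n:ℝ) ^ ((1:ℝ)/2 + δ) * (s:ℝ) ^ ((1:ℝ)/2 - δ) := by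
            rw [he_def]; ring
        _ ≤ (k:ℝ) := hineq
    have h2 : (s:ℝ) ≤ ((k:ℝ) / ((2:ℝ) ^ (40:ℕ) * (n:ℝ) ^ ((1:ℝ)/2 + δ))) ^ β := by
      have hss : (s:ℝ) = ((s:ℝ) ^ e) ^ β := by
        rw [← Real.rpow_mul (by positivity), heβ, Real.rpow_one]
      rw [hss]
      exact Real.rpow_le_rpow (Real.rpow_nonneg (by positivity) _) h1 hβpos.le
    have h3 : ((k:ℝ) / ((2:ℝ) ^ (40:ℕ) * (n:ℝ) ^ ((1:ℝ)/2 + δ))) ^ β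
        = (k:ℝ) ^ β / (((2:ℝ) ^ (40:ℕ)) ^ β * (n:ℝ) ^ (((1:ℝ)/2 + δ) * β)) := by
      rw [Real.div_rpow (by positivity) hD.le, Real.mul_rpow (by positivity) (by positivity),
        ← Real.rpow_natCast (2:ℝ) 40, ← Real.rpow_mul (by positivity : (0:ℝ) ≤ (n:ℝ)),
        Real.rpow_natCast]
    have h4 : (k:ℝ) ^ β = (k:ℝ) * (k:ℝ) ^ (β - 1) := by
      have hkpos : (0:ℝ) < (k:ℝ) := by linarith
      have hh := Real.rpow_add hkpos 1 (β - 1)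
      rw [Real.rpow_one] at hh
      calc (k:ℝ) ^ β = (k:ℝ) ^ (1 + (β - 1)) := by norm_num
        _ = (k:ℝ) * (k:ℝ) ^ (β - 1) := hh
    have h5 : (k:ℝ) ^ (β - 1) ≤ (n:ℝ) ^ (β - 1) :=
      Real.rpow_le_rpow (by positivity) hknR (by linarith)
    have hexp : ((1:ℝ)/2 + δ) * β = β - 1 := by
      have : (1:ℝ)/2 + δ = 1 - e := by rw [he_def]; ring
      rw [this]
      linear_combination (-1 : ℝ) * heβ
    have h6 : (s:ℝ) ≤ (k:ℝ) * (n:ℝ) ^ (β - 1) / (((2:ℝ) ^ (40:ℕ)) ^ β * (n:ℝ) ^ (β - 1)) := by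
      rw [h3, h4, hexp] at h2
      refine h2.trans ?_
      apply div_le_div_of_nonneg_right ?_ (by positivity)
      · exact mul_le_mul_of_nonneg_left h5 (by positivity)
    have h7 : (k:ℝ) * (n:ℝ) ^ (β - 1) / (((2:ℝ) ^ (40:ℕ)) ^ β * (n:ℝ) ^ (β - 1))
        = (k:ℝ) / ((2:ℝ) ^ (40:ℕ)) ^ β := by
      have hnb : (0:ℝ) < (n:ℝ) ^ (β - 1) := Real.rpow_pos_of_pos (by positivity) _
      field_simp
    have h8 : (4:ℝ) ≤ ((2:ℝ) ^ (40:ℕ)) ^ β := by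
      have h80 : (1:ℝ) ≤ (2:ℝ) ^ (40:ℕ) := by norm_num
      calc (4:ℝ) ≤ ((2:ℝ) ^ (40:ℕ)) ^ (1:ℝ) := by rw [Real.rpow_one]; norm_num
        _ ≤ ((2:ℝ) ^ (40:ℕ)) ^ β := Real.rpow_le_rpow_of_exponent_le h80 (by linarith)
    have h9 : (k:ℝ) / ((2:ℝ) ^ (40:ℕ)) ^ β ≤ (k:ℝ) / 4 := by
      apply div_le_div_of_nonneg_left (by positivity) (by norm_num) h8
    have := (h6.trans (le_of_eq h7)).trans h9
    linarith




lemma n_le_two_rpow_sqrt {n : ℕ} (hn : (2:ℝ) ^ (80:ℕ) ≤ (n:ℝ)) :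
    (n:ℝ) ≤ (2:ℝ) ^ ((n:ℝ) ^ ((1:ℝ)/2)) := by
  have hnpos : (0:ℝ) < n := lt_of_lt_of_le (by positivity) hn
  set y := (n:ℝ) ^ ((1:ℝ)/4) with hy
  have hy8 : (8:ℝ) ≤ y := by
    have h1 : ((2:ℝ) ^ (80:ℕ)) ^ ((1:ℝ)/4) ≤ y :=
      Real.rpow_le_rpow (by positivity) hn (by norm_num)
    have h2 : ((2:ℝ) ^ (80:ℕ)) ^ ((1:ℝ)/4) = (2:ℝ) ^ (20:ℕ) := by
      rw [← Real.rpow_natCast (2:ℝ) 80, ← Real.rpow_mul (by norm_num),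
        ← Real.rpow_natCast (2:ℝ) 20]
      norm_num
    rw [h2] at h1
    calc (8:ℝ) ≤ (2:ℝ) ^ (20:ℕ) := by norm_num
      _ ≤ y := h1
  have hypos : (0:ℝ) < y := by linarith
  have hlogy : Real.log y = (1/4) * Real.log n := by rw [hy, Real.log_rpow hnpos]
  have hlogn : Real.log n ≤ 4 * y := by
    have h3 := Real.log_le_sub_one_of_pos hypos
    nlinarith
  have hsq : (n:ℝ) ^ ((1:ℝ)/2) = y * y := by
    rw [hy, ← Real.rpow_add hnpos]
    norm_num
  have hln2 : (1:ℝ)/2 ≤ Real.log 2 := by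
    have := Real.log_two_gt_d9
    linarith
  have key : Real.log n ≤ Real.log 2 * ((n:ℝ) ^ ((1:ℝ)/2)) := by
    rw [hsq]
    nlinarith
  calc (n:ℝ) = Real.exp (Real.log n) := (Real.exp_log hnpos).symm
    _ ≤ Real.exp (Real.log 2 * ((n:ℝ) ^ ((1:ℝ)/2))) := Real.exp_le_exp.2 key
    _ = (2:ℝ) ^ ((n:ℝ) ^ ((1:ℝ)/2)) := (Real.rpow_def_of_pos (by norm_num) _).symm

lemma numeric_core {n k s mnat L : ℕ}
    (hL : (L:ℝ) ≤ ((2:ℝ) ^ (2*s)) * (16 * (n:ℝ) ^ (3:ℕ)))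
    (hn1 : (1:ℝ) ≤ (n:ℝ)) (hnbig : (2:ℝ) ^ (80:ℕ) ≤ (n:ℝ))
    (hk1 : (1:ℝ) ≤ (k:ℝ))
    (hKn : (2:ℝ) ^ (40:ℕ) * (n:ℝ) ^ ((1:ℝ)/2) ≤ (k:ℝ)) (hsk : 4*(s:ℝ) ≤ (k:ℝ))
    (hm : (mnat:ℝ) ≤ (n:ℝ) ^ ((1:ℝ)/8)) :
    ((2:ℝ) ^ L) * (2 * (2:ℝ) ^ mnat)
      * Real.exp (-((((2:ℝ) ^ (-((n:ℝ) ^ ((1:ℝ)/8))) / (2 * (2:ℝ) ^ mnat)) ^ 2)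
          / (8 * (2:ℝ) ^ (-(k:ℝ))))) < 1 := by
  have hnpos : (0:ℝ) < n := by linarith
  set SQ := (n:ℝ) ^ ((1:ℝ)/2) with hSQ
  set NC := (n:ℝ) ^ ((1:ℝ)/8) with hNC
  have hSQ1 : (1:ℝ) ≤ SQ := by
    rw [hSQ]
    calc (1:ℝ) = (1:ℝ) ^ ((1:ℝ)/2) := (Real.one_rpow _).symm
      _ ≤ (n:ℝ) ^ ((1:ℝ)/2) := Real.rpow_le_rpow (by norm_num) hn1 (by norm_num)
  have hNC1 : (1:ℝ) ≤ NC := by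
    rw [hNC]
    calc (1:ℝ) = (1:ℝ) ^ ((1:ℝ)/8) := (Real.one_rpow _).symm
      _ ≤ (n:ℝ) ^ ((1:ℝ)/8) := Real.rpow_le_rpow (by norm_num) hn1 (by norm_num)
  have hNCSQ : NC ≤ SQ := Real.rpow_le_rpow_of_exponent_le hn1 (by norm_num)
  -- rewrite powers of two as rpow
  have hpow : ∀ j : ℕ, ((2:ℝ) ^ j) = (2:ℝ) ^ ((j:ℕ):ℝ) := fun j => (Real.rpow_natCast 2 j).symm
  -- the exponent x
  set m := (mnat:ℝ) with hmdef
  have hx : (((2:ℝ) ^ (-NC) / (2 * (2:ℝ) ^ mnat)) ^ 2) / (8 * (2:ℝ) ^ (-(k:ℝ)))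
      = (2:ℝ) ^ ((k:ℝ) - 2*NC - 2*m - 5) := by
    have h2m : (2 * (2:ℝ) ^ mnat) = (2:ℝ) ^ ((1:ℝ) + m) := by
      rw [Real.rpow_add (by norm_num), Real.rpow_one, hpow mnat, hmdef]
    have h8' : (8 * (2:ℝ) ^ (-(k:ℝ))) = (2:ℝ) ^ ((3:ℝ) - (k:ℝ)) := by
      rw [Real.rpow_sub (by norm_num : (0:ℝ) < 2), Real.rpow_neg (by norm_num : (0:ℝ) ≤ 2),
        show (2:ℝ) ^ (3:ℝ) = 8 by
          rw [show (3:ℝ) = ((3:ℕ):ℝ) by norm_num, Real.rpow_natCast]; norm_num]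
      ring
    rw [h2m, h8', ← Real.rpow_sub (by norm_num)]
    rw [show ((2:ℝ) ^ (-NC - (1 + m))) ^ 2 = (2:ℝ) ^ (-NC - (1+m)) * (2:ℝ) ^ (-NC - (1+m)) by ring,
      ← Real.rpow_add (by norm_num), ← Real.rpow_sub (by norm_num)]
    congr 1
    ring
  rw [hx]
  -- combine the two powers of 2 in front
  have hfront : ((2:ℝ) ^ L) * (2 * (2:ℝ) ^ mnat) = (2:ℝ) ^ (L + mnat + 1) := by
    rw [pow_add, pow_add, pow_one]
    ring
  rw [hfront]
  set J : ℕ := L + mnat + 1 with hJ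
  set E : ℝ := (k:ℝ) - 2*NC - 2*m - 5 with hE
  -- step: (J:ℝ) + 1 ≤ 2 ^ E
  have hn3 : (n:ℝ) ^ (3:ℕ) ≤ (2:ℝ) ^ (3 * SQ) := by
    have h1 : (n:ℝ) ≤ (2:ℝ) ^ SQ := n_le_two_rpow_sqrt hnbig
    calc (n:ℝ) ^ (3:ℕ) ≤ ((2:ℝ) ^ SQ) ^ (3:ℕ) := pow_le_pow_left₀ hnpos.le h1 3
      _ = (2:ℝ) ^ (3 * SQ) := by
          rw [← Real.rpow_natCast ((2:ℝ) ^ SQ) 3, ← Real.rpow_mul (by norm_num : (0:ℝ) ≤ 2)]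
          norm_num [mul_comm]
  have hJbound : ((J:ℕ):ℝ) + 1 ≤ (2:ℝ) ^ ((2*s:ℝ) + 5 + 3 * SQ) := by
    have h1 : ((J:ℕ):ℝ) + 1 = (L:ℝ) + m + 2 := by
      rw [hJ]; push_cast; ring
    have hge1 : (1:ℝ) ≤ (2:ℝ) ^ (2*s) := one_le_pow₀ (by norm_num)
    have hmn : m ≤ (n:ℝ) := by
      calc m ≤ NC := hm
        _ ≤ SQ := hNCSQ
        _ ≤ (n:ℝ) := by
            rw [hSQ]
            calc (n:ℝ) ^ ((1:ℝ)/2) ≤ (n:ℝ) ^ ((1:ℝ)) :=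
                  Real.rpow_le_rpow_of_exponent_le hn1 (by norm_num)
              _ = (n:ℝ) := Real.rpow_one _
    have hn3' : (n:ℝ) ≤ (n:ℝ) ^ (3:ℕ) := by
      have e : (n:ℝ) ^ (3:ℕ) = (n:ℝ) * (n:ℝ) * (n:ℝ) := by ring
      nlinarith
    have hN31 : (1:ℝ) ≤ (n:ℝ) ^ (3:ℕ) := hn1.trans hn3'
    have hm2 : m + 2 ≤ 16 * (n:ℝ) ^ (3:ℕ) := by linarith
    have hm2' : m + 2 ≤ ((2:ℝ) ^ (2*s)) * (16 * (n:ℝ) ^ (3:ℕ)) := by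
      calc m + 2 ≤ 16 * (n:ℝ) ^ (3:ℕ) := hm2
        _ = 1 * (16 * (n:ℝ) ^ (3:ℕ)) := by ring
        _ ≤ ((2:ℝ) ^ (2*s)) * (16 * (n:ℝ) ^ (3:ℕ)) := by
            apply mul_le_mul_of_nonneg_right hge1 (by positivity)
    have h3 : (L:ℝ) + m + 2 ≤ ((2:ℝ) ^ (2*s)) * (32 * (n:ℝ) ^ (3:ℕ)) := by
      have : ((2:ℝ) ^ (2*s)) * (16 * (n:ℝ) ^ (3:ℕ)) + ((2:ℝ) ^ (2*s)) * (16 * (n:ℝ) ^ (3:ℕ))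
          = ((2:ℝ) ^ (2*s)) * (32 * (n:ℝ) ^ (3:ℕ)) := by ring
      linarith
    have h4 : ((2:ℝ) ^ (2*s)) * (32 * (n:ℝ) ^ (3:ℕ))
        ≤ (2:ℝ) ^ ((2*s:ℝ) + 5 + 3 * SQ) := by
      have e1 : (2:ℝ) ^ ((2*s:ℝ) + 5 + 3 * SQ)
          = ((2:ℝ) ^ ((2*s:ℝ))) * ((2:ℝ) ^ ((5:ℝ))) * ((2:ℝ) ^ (3 * SQ)) := by
        rw [← Real.rpow_add (by norm_num), ← Real.rpow_add (by norm_num)]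
      rw [e1]
      have e2 : (2:ℝ) ^ ((2*s:ℝ)) = (2:ℝ) ^ (2*s : ℕ) := by
        rw [hpow (2*s)]
        norm_num
      have e3 : (2:ℝ) ^ ((5:ℝ)) = 32 := by
        rw [show (5:ℝ) = ((5:ℕ):ℝ) by norm_num, Real.rpow_natCast]
        norm_num
      rw [e2, e3]
      have hp : (0:ℝ) ≤ (2:ℝ) ^ (2*s:ℕ) := by positivity
      nlinarith [hn3]
    rw [h1]
    linarith
  have hEbig : (2*s:ℝ) + 5 + 3 * SQ ≤ E := by
    rw [hE]
    have hKn' : (1099511627776:ℝ) * SQ ≤ (k:ℝ) := by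
      have : ((2:ℝ) ^ (40:ℕ)) = 1099511627776 := by norm_num
      rw [← this]
      exact hKn
    have hm' : m ≤ SQ := hm.trans hNCSQ
    have hNC' : NC ≤ SQ := hNCSQ
    linarith [hKn', hsk, hm', hNC', hSQ1, hk1]
  have hJE : ((J:ℕ):ℝ) + 1 ≤ (2:ℝ) ^ E := by
    refine hJbound.trans ?_
    exact Real.rpow_le_rpow_of_exponent_le (by norm_num) hEbig
  -- final : 2^J * exp (-(2^E)) < 1
  have hlog2 : Real.log 2 < 1 := by
    have := Real.log_two_lt_d9
    linarith
  have hJnn : (0:ℝ) ≤ ((J:ℕ):ℝ) := Nat.cast_nonneg _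
  have h2J : ((2:ℝ) ^ (J:ℕ)) = Real.exp (Real.log 2 * ((J:ℕ):ℝ)) := by
    rw [hpow J, Real.rpow_def_of_pos (by norm_num)]
  have hlt : Real.log 2 * ((J:ℕ):ℝ) < (2:ℝ) ^ E := by
    calc Real.log 2 * ((J:ℕ):ℝ) ≤ 1 * ((J:ℕ):ℝ) := by
          apply mul_le_mul_of_nonneg_right hlog2.le hJnn
      _ = ((J:ℕ):ℝ) := one_mul _
      _ < ((J:ℕ):ℝ) + 1 := by linarith
      _ ≤ (2:ℝ) ^ E := hJE
  calc ((2:ℝ) ^ (J:ℕ)) * Real.exp (-((2:ℝ) ^ E))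
      = Real.exp (Real.log 2 * ((J:ℕ):ℝ) - (2:ℝ) ^ E) := by
        rw [h2J, ← Real.exp_add, sub_eq_add_neg]
    _ < Real.exp 0 := Real.exp_lt_exp.2 (by linarith)
    _ = 1 := Real.exp_zero




lemma card_TT_le (n s a : ℕ) :
    Fintype.card ((Fin n → Fin (2^s) → Fin (2^s) → ZMod 2 → Fin (2^a+1)) × Fin (2^s))
      ≤ 2 ^ ((a+1) * (2 * 2^s * 2^s * n) + s) := by
  have hcard : Fintype.card ((Fin n → Fin (2^s) → Fin (2^s) → ZMod 2 → Fin (2^a+1)) × Fin (2^s))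
      = ((2^a+1) ^ (2 * 2^s * 2^s * n)) * 2^s := by
    simp only [Fintype.card_prod, Fintype.card_fun, Fintype.card_fin, ZMod.card]
    rw [← pow_mul, ← pow_mul, ← pow_mul]
    ring_nf
  have hle : 2^a + 1 ≤ 2^(a+1) := by
    have h1 : 1 ≤ 2^a := Nat.one_le_two_pow
    have h2 : 2^(a+1) = 2^a + 2^a := by rw [pow_succ]; ring
    omega
  rw [hcard, pow_add]
  apply Nat.mul_le_mul_right
  calc (2^a+1) ^ (2*2^s*2^s*n) ≤ (2^(a+1)) ^ (2*2^s*2^s*n) := Nat.pow_le_pow_left hle _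
    _ = 2 ^ ((a+1)*(2*2^s*2^s*n)) := (pow_mul 2 (a+1) _).symm

lemma nat_le_two_pow (n : ℕ) : (n:ℝ) ≤ (2:ℝ)^n := by
  have h := Nat.lt_two_pow_self (n := n)
  have : (n:ℝ) < ((2^n : ℕ) : ℝ) := by exact_mod_cast h
  push_cast at this
  linarith

lemma tail_small {n s mnat : ℕ} (hn1 : 1 ≤ n) (hmn : mnat ≤ n)
    (hNCn : (n:ℝ) ^ ((1:ℝ)/8) ≤ (n:ℝ)) :
    ((2:ℝ) ^ mnat) * (2 * (((2:ℝ) ^ n) * (((2:ℝ) ^ (s*n)) * ((n:ℝ) * (((2:ℝ) ^ (n*s+6*n))⁻¹)))))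
      ≤ (2:ℝ) ^ (-((n:ℝ) ^ ((1:ℝ)/8))) / 2 := by
  set B := n*s + 6*n with hB
  set A : ℕ := mnat + 1 + n + s*n with hA
  have e1 : ((2:ℝ) ^ mnat) * (2 * (((2:ℝ) ^ n) * (((2:ℝ) ^ (s*n)) * ((n:ℝ) * (((2:ℝ) ^ B)⁻¹)))))
      = (n:ℝ) * ((2:ℝ) ^ A * ((2:ℝ) ^ B)⁻¹) := by
    rw [hA, pow_add 2 (mnat+1+n) (s*n), pow_add 2 (mnat+1) n, pow_add 2 mnat 1, pow_one]
    ring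
  rw [e1]
  have h2 : (n:ℝ) * ((2:ℝ) ^ A * ((2:ℝ) ^ B)⁻¹) ≤ (2:ℝ)^n * ((2:ℝ) ^ A * ((2:ℝ) ^ B)⁻¹) := by
    apply mul_le_mul_of_nonneg_right (nat_le_two_pow n) (by positivity)
  have h3 : (2:ℝ)^n * ((2:ℝ) ^ A * ((2:ℝ) ^ B)⁻¹) = (2:ℝ) ^ (n + A) * ((2:ℝ) ^ B)⁻¹ := by
    rw [pow_add]; ring
  have hexp : (n + A) + (n + 1) ≤ B := by
    rw [hA, hB, Nat.mul_comm s n]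
    omega
  have h4 : (2:ℝ) ^ (n + A) * ((2:ℝ) ^ B)⁻¹ ≤ ((2:ℝ) ^ (n+1))⁻¹ := by
    rw [mul_inv_le_iff₀ (by positivity)]
    rw [inv_mul_eq_div, le_div_iff₀ (by positivity)]
    rw [← pow_add]
    exact pow_le_pow_right₀ (by norm_num) hexp
  have h5 : ((2:ℝ) ^ (n+1))⁻¹ ≤ (2:ℝ) ^ (-((n:ℝ) ^ ((1:ℝ)/8))) / 2 := by
    have e2 : ((2:ℝ) ^ (n+1))⁻¹ = (2:ℝ) ^ (-(n:ℝ)) / 2 := by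
      rw [Real.rpow_neg (by norm_num), Real.rpow_natCast]
      rw [pow_add, pow_one]
      field_simp
    rw [e2]
    apply div_le_div_of_nonneg_right ?_ (by norm_num)
    · exact Real.rpow_le_rpow_of_exponent_le (by norm_num) (by linarith)
  calc (n:ℝ) * ((2:ℝ) ^ A * ((2:ℝ) ^ B)⁻¹) ≤ (2:ℝ)^n * ((2:ℝ) ^ A * ((2:ℝ) ^ B)⁻¹) := h2
    _ = (2:ℝ) ^ (n + A) * ((2:ℝ) ^ B)⁻¹ := h3
    _ ≤ ((2:ℝ) ^ (n+1))⁻¹ := h4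
    _ ≤ _ := h5




lemma point_bound {V : Type*} [Fintype V] (X Q ι : V → ℝ) (Mi t D : ℝ)
    (hι0 : ∀ v, 0 ≤ ι v) (hι1 : ∀ v, ι v ≤ 1)
    (hQX : ∀ v, Q v ≤ X v) (hQ0 : ∀ v, 0 ≤ Q v)
    (hXsum : ∑ v, X v = 1) (hD : ∑ v, (X v - Q v) ≤ D)
    (hMi0 : 0 ≤ Mi) (hMi1 : Mi ≤ 1)
    (hZ : |∑ v, Q v * (ι v - Mi)| ≤ t) :
    |(∑ v, X v * ι v) - Mi| ≤ t + 2 * D := by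
  have e1 : ∑ v, (X v - Q v) * ι v = (∑ v, X v * ι v) - ∑ v, Q v * ι v := by
    rw [← Finset.sum_sub_distrib]
    exact Finset.sum_congr rfl fun v _ => by ring
  have e2 : ∑ v, Q v * (ι v - Mi) = (∑ v, Q v * ι v) - (∑ v, Q v) * Mi := by
    rw [Finset.sum_mul, ← Finset.sum_sub_distrib]
    exact Finset.sum_congr rfl fun v _ => by ring
  have hdiff_nn : ∀ v, 0 ≤ X v - Q v := fun v => by linarith [hQX v]
  have hsumdiff : ∑ v, (X v - Q v) = 1 - ∑ v, Q v := by
    rw [Finset.sum_sub_distrib, hXsum]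
  have hsumdiff_nn : 0 ≤ ∑ v, (X v - Q v) := Finset.sum_nonneg fun v _ => hdiff_nn v
  have hid : (∑ v, X v * ι v) - Mi
      = (∑ v, (X v - Q v) * ι v) + (∑ v, Q v * (ι v - Mi)) + ((∑ v, Q v) - 1) * Mi := by
    rw [e1, e2]
    ring
  have hS1 : |∑ v, (X v - Q v) * ι v| ≤ D := by
    have h0 : 0 ≤ ∑ v, (X v - Q v) * ι v :=
      Finset.sum_nonneg fun v _ => mul_nonneg (hdiff_nn v) (hι0 v)
    rw [abs_of_nonneg h0]
    calc ∑ v, (X v - Q v) * ι v ≤ ∑ v, (X v - Q v) := by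
          refine Finset.sum_le_sum fun v _ => ?_
          have := hι1 v
          nlinarith [hdiff_nn v, hι0 v]
      _ ≤ D := hD
  have hS3 : |((∑ v, Q v) - 1) * Mi| ≤ D := by
    rw [abs_mul]
    have h1 : |(∑ v, Q v) - 1| = 1 - ∑ v, Q v := by
      rw [abs_of_nonpos (by linarith [hsumdiff, hsumdiff_nn])]
      ring
    rw [h1, abs_of_nonneg hMi0]
    have h2 : 1 - ∑ v, Q v ≤ D := by linarith [hsumdiff, hD]
    nlinarith [hsumdiff, hsumdiff_nn]
  have h1 := abs_add_le (∑ v, (X v - Q v) * ι v + ∑ v, Q v * (ι v - Mi)) ((∑ v, Q v - 1) * Mi)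
  have h2 := abs_add_le (∑ v, (X v - Q v) * ι v) (∑ v, Q v * (ι v - Mi))
  rw [hid]
  linarith [hS1, hS3, hZ]


set_option maxHeartbeats 1000000

/-- For any fixed `δ ∈ (0, 1/2]` there exist constants `C, c > 0` such that
for all positive integers `n, k, s` with `k ≥ C·n^{1/2+δ}·s^{1/2−δ}`, there is an extractor
`Ext : {0,1}ⁿ → {0,1}^m` with `m = ⌊n^c⌋` such that for every space-`s` source `X` over
`{0,1}ⁿ` with min-entropy at least `k`, `|Ext(X) − U_m| ≤ 2^{−n^c}`. -/
theorem smallSpaceExtractor_lowError :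
    ∀ δ : ℝ, 0 < δ → δ ≤ 1 / 2 →
      ∃ C : ℝ, 0 < C ∧ ∃ c : ℝ, 0 < c ∧
        ∀ n k s : ℕ, 0 < n → 0 < k → 0 < s →
          C * (n : ℝ) ^ ((1 : ℝ) / 2 + δ) * (s : ℝ) ^ ((1 : ℝ) / 2 - δ) ≤ (k : ℝ) →
          ∃ Ext : (Fin n → ZMod 2) → (Fin (⌊(n : ℝ) ^ c⌋₊) → ZMod 2),
            ∀ X : (Fin n → ZMod 2) → ℝ,
              IsSpaceSource s n X → (k : ℝ) ≤ minEntropy X →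
              statDist (pushforward X Ext) (uniformDist _) ≤ (2 : ℝ) ^ (-((n : ℝ) ^ c)) := by
  classical
  intro δ hδ0 hδ2
  refine ⟨(2:ℝ) ^ (40:ℕ), by positivity, (1:ℝ)/8, by norm_num, ?_⟩
  intro n k s hn hk hs hineq
  by_cases hkn : k ≤ n
  swap
  · -- vacuous case : no source can have min-entropy ≥ k > n
    refine ⟨fun _ _ => 0, fun X hsp hent => ?_⟩
    exfalso
    obtain ⟨B, hB⟩ := hsp
    have hnn : ∀ x, 0 ≤ X x := fun x => by
      rw [hB]
      exact Finset.sum_nonneg fun p _ => Finset.prod_nonneg fun i _ => B.nonneg _ _ _ _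
    have hsum : ∑ x, X x = 1 := by
      rw [Finset.sum_congr rfl (fun x _ => hB x)]
      simp only [prob_eq_probFun]
      exact probFun_sum_one n B.trans B.sum_one B.start
    exact hkn ((entropy_facts X hnn hsum hent).2)
  · -- main case
    obtain ⟨hKn, hsk⟩ := arith_pack hδ0 hδ2 hn hk hs hkn hineq
    have hn1 : (1:ℝ) ≤ (n:ℝ) := by exact_mod_cast hn
    have hk1 : (1:ℝ) ≤ (k:ℝ) := by exact_mod_cast hk
    have hs1 : (1:ℝ) ≤ (s:ℝ) := by exact_mod_cast hs
    have hknR : (k:ℝ) ≤ (n:ℝ) := by exact_mod_cast hkn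
    have hnR_pos : (0:ℝ) < n := by linarith
    have hsqrt_pos : (0:ℝ) < (n:ℝ) ^ ((1:ℝ)/2) := Real.rpow_pos_of_pos hnR_pos _
    have hnn_eq : (n:ℝ) ^ ((1:ℝ)/2) * (n:ℝ) ^ ((1:ℝ)/2) = (n:ℝ) := by
      rw [← Real.rpow_add hnR_pos]
      norm_num
    have h40 : (2:ℝ) ^ (40:ℕ) ≤ (n:ℝ) ^ ((1:ℝ)/2) := by
      have h2 : (2:ℝ) ^ (40:ℕ) * (n:ℝ) ^ ((1:ℝ)/2) ≤ (n:ℝ) ^ ((1:ℝ)/2) * (n:ℝ) ^ ((1:ℝ)/2) := by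
        rw [hnn_eq]
        exact hKn.trans hknR
      exact le_of_mul_le_mul_right h2 hsqrt_pos
    have hnbig : (2:ℝ) ^ (80:ℕ) ≤ (n:ℝ) := by
      calc (2:ℝ) ^ (80:ℕ) = (2:ℝ) ^ (40:ℕ) * (2:ℝ) ^ (40:ℕ) := by norm_num
        _ ≤ (n:ℝ) ^ ((1:ℝ)/2) * (n:ℝ) ^ ((1:ℝ)/2) :=
            mul_le_mul h40 h40 (by positivity) hsqrt_pos.le
        _ = (n:ℝ) := hnn_eq
    have hNC_nn : (0:ℝ) ≤ (n:ℝ) ^ ((1:ℝ)/8) := (Real.rpow_pos_of_pos hnR_pos _).le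
    have hNC1 : (1:ℝ) ≤ (n:ℝ) ^ ((1:ℝ)/8) := by
      calc (1:ℝ) = (1:ℝ) ^ ((1:ℝ)/8) := (Real.one_rpow _).symm
        _ ≤ _ := Real.rpow_le_rpow (by norm_num) hn1 (by norm_num)
    have hNCn : (n:ℝ) ^ ((1:ℝ)/8) ≤ (n:ℝ) := by
      calc (n:ℝ) ^ ((1:ℝ)/8) ≤ (n:ℝ) ^ ((1:ℝ)) :=
            Real.rpow_le_rpow_of_exponent_le hn1 (by norm_num)
        _ = (n:ℝ) := Real.rpow_one _
    set mnat := ⌊(n:ℝ) ^ ((1:ℝ)/8)⌋₊ with hmnat_def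
    have hm_le : (mnat:ℝ) ≤ (n:ℝ) ^ ((1:ℝ)/8) := Nat.floor_le hNC_nn
    have hmn_nat : mnat ≤ n := by
      have h1 : mnat ≤ ⌊(n:ℝ)⌋₊ := Nat.floor_le_floor hNCn
      simpa only [Nat.floor_natCast] using h1
    set a := n * s + 6 * n with ha_def
    set θ : ℝ := (2:ℝ) ^ (-(k:ℝ)) with hθdef
    have hθpos : 0 < θ := Real.rpow_pos_of_pos (by norm_num) _
    set ε : ℝ := (2:ℝ) ^ (-((n:ℝ) ^ ((1:ℝ)/8))) with hεdef
    have hεpos : 0 < ε := Real.rpow_pos_of_pos (by norm_num) _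
    have hε1 : ε ≤ 1 := by
      rw [hεdef]
      exact Real.rpow_le_one_of_one_le_of_nonpos (by norm_num) (by linarith)
    set t : ℝ := ε / (2 * (2:ℝ) ^ mnat) with htdef
    have h2m_pos : (0:ℝ) < 2 * (2:ℝ) ^ mnat := by positivity
    have htpos : 0 < t := div_pos hεpos h2m_pos
    have ht1 : t ≤ 1 := by
      rw [htdef, div_le_one h2m_pos]
      have h1 : (1:ℝ) ≤ (2:ℝ) ^ mnat := one_le_pow₀ (by norm_num)
      nlinarith
    -- the finite family of candidate distributions
    set Qs : Finset ((Fin n → ZMod 2) → ℝ) :=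
      (Finset.univ.image
        (fun τ : (Fin n → Fin (2^s) → Fin (2^s) → ZMod 2 → Fin (2^a+1)) × Fin (2^s) =>
          probFun n (Tof n a τ.1) τ.2)).filter
        (fun Q => (∀ v, 0 ≤ Q v) ∧ (∀ v, Q v ≤ θ) ∧ (∑ v, Q v) ≤ 1) with hQsdef
    set L : ℕ := (a+1) * (2 * 2^s * 2^s * n) + s with hLdef
    have hQscard : (Qs.card : ℝ) ≤ (2:ℝ) ^ L := by
      have h1 : Qs.card ≤ 2 ^ L := by
        calc Qs.card
            ≤ (Finset.univ.image
                (fun τ : (Fin n → Fin (2^s) → Fin (2^s) → ZMod 2 → Fin (2^a+1)) × Fin (2^s) =>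
                  probFun n (Tof n a τ.1) τ.2)).card := Finset.card_filter_le _ _
          _ ≤ (Finset.univ :
                Finset ((Fin n → Fin (2^s) → Fin (2^s) → ZMod 2 → Fin (2^a+1)) × Fin (2^s))).card :=
              Finset.card_image_le
          _ = Fintype.card _ := Finset.card_univ
          _ ≤ 2 ^ L := card_TT_le n s a
      calc (Qs.card : ℝ) ≤ ((2 ^ L : ℕ) : ℝ) := by exact_mod_cast h1
        _ = (2:ℝ) ^ L := by push_cast; ring
    have hsnR : (s:ℝ) ≤ (n:ℝ) := by linarith
    have hLbound : (L:ℝ) ≤ ((2:ℝ) ^ (2*s)) * (16 * (n:ℝ) ^ (3:ℕ)) := by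
      have hcast : (L:ℝ) = ((n:ℝ)*(s:ℝ) + 6*(n:ℝ) + 1) * (2 * (2:ℝ)^s * (2:ℝ)^s * (n:ℝ)) + (s:ℝ) := by
        rw [hLdef, ha_def]
        push_cast
        ring
      have hP : ((2:ℝ)^s) * ((2:ℝ)^s) = (2:ℝ)^(2*s) := by
        rw [← pow_add]
        congr 1
        ring
      have h7 : (n:ℝ)*(s:ℝ) + 6*(n:ℝ) + 1 ≤ 7 * (n:ℝ)^(2:ℕ) := by nlinarith
      have hstep1 : ((n:ℝ)*(s:ℝ) + 6*(n:ℝ) + 1) * (2 * (2:ℝ)^s * (2:ℝ)^s * (n:ℝ))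
          ≤ (7 * (n:ℝ)^(2:ℕ)) * (2 * (2:ℝ)^s * (2:ℝ)^s * (n:ℝ)) :=
        mul_le_mul_of_nonneg_right h7 (by positivity)
      have hstep2 : (7 * (n:ℝ)^(2:ℕ)) * (2 * (2:ℝ)^s * (2:ℝ)^s * (n:ℝ))
          = ((2:ℝ)^(2*s)) * (14 * (n:ℝ)^(3:ℕ)) := by
        rw [← hP]
        ring
      have h2s1 : (1:ℝ) ≤ (2:ℝ)^(2*s) := one_le_pow₀ (by norm_num)
      have hn3' : (n:ℝ) ≤ (n:ℝ)^(3:ℕ) := by nlinarith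
      have hstep3 : (s:ℝ) ≤ ((2:ℝ)^(2*s)) * (2 * (n:ℝ)^(3:ℕ)) := by nlinarith
      have hsplit : ((2:ℝ)^(2*s)) * (14 * (n:ℝ)^(3:ℕ)) + ((2:ℝ)^(2*s)) * (2 * (n:ℝ)^(3:ℕ))
          = ((2:ℝ)^(2*s)) * (16 * (n:ℝ)^(3:ℕ)) := by ring
      rw [hcast]
      linarith
    -- the counting condition
    have hWcard : (Fintype.card (Fin mnat → ZMod 2) : ℝ) = (2:ℝ) ^ mnat := by
      simp only [Fintype.card_fun, Fintype.card_fin, ZMod.card]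
      push_cast
      ring
    have hcond : (Qs.card : ℝ) * (2 * (Fintype.card (Fin mnat → ZMod 2) : ℝ))
        * Real.exp (-(t^2/(8*θ))) < 1 := by
      have hcore := numeric_core (n:=n) (k:=k) (s:=s) (mnat:=mnat) (L:=L)
        hLbound hn1 hnbig hk1 hKn hsk hm_le
      have hform : t^2/(8*θ)
          = (((2:ℝ) ^ (-((n:ℝ) ^ ((1:ℝ)/8))) / (2 * (2:ℝ) ^ mnat)) ^ 2) / (8 * (2:ℝ) ^ (-(k:ℝ))) := by
        rw [htdef, hεdef, hθdef]
      rw [hWcard, hform]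
      calc (Qs.card : ℝ) * (2 * (2:ℝ) ^ mnat) * Real.exp
            (-((((2:ℝ) ^ (-((n:ℝ) ^ ((1:ℝ)/8))) / (2 * (2:ℝ) ^ mnat)) ^ 2) / (8 * (2:ℝ) ^ (-(k:ℝ)))))
          ≤ ((2:ℝ) ^ L) * (2 * (2:ℝ) ^ mnat) * Real.exp
            (-((((2:ℝ) ^ (-((n:ℝ) ^ ((1:ℝ)/8))) / (2 * (2:ℝ) ^ mnat)) ^ 2) / (8 * (2:ℝ) ^ (-(k:ℝ))))) := by
            apply mul_le_mul_of_nonneg_right _ (Real.exp_nonneg _)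
            exact mul_le_mul_of_nonneg_right hQscard (by positivity)
        _ < 1 := hcore
    -- get the good coloring
    obtain ⟨g, hg⟩ := exists_good_coloring (V := Fin n → ZMod 2) (W := Fin mnat → ZMod 2)
      Qs θ t hθpos htpos ht1
      (fun Q hQm => (Finset.mem_filter.1 hQm).2)
      (fun c χ h1 h2 h3 h4 h5 => count_bad_le c χ θ t h1 h2 h3 hθpos htpos ht1 h4 h5)
      hcond
    refine ⟨g, ?_⟩
    intro X hsp hent
    obtain ⟨B, hB⟩ := hsp
    have hXnn : ∀ x, 0 ≤ X x := fun x => by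
      rw [hB]
      exact Finset.sum_nonneg fun p _ => Finset.prod_nonneg fun i _ => B.nonneg _ _ _ _
    have hXsum : ∑ x, X x = 1 := by
      rw [Finset.sum_congr rfl (fun x _ => hB x)]
      simp only [prob_eq_probFun]
      exact probFun_sum_one n B.trans B.sum_one B.start
    have hXle : ∀ x, X x ≤ θ := by
      have h1 := (entropy_facts X hXnn hXsum hent).1
      intro x
      rw [hθdef]
      exact h1 x
    set Q : (Fin n → ZMod 2) → ℝ := probFun n (Tof n a (roundTbl B a)) B.start with hQdef
    have happrox := fun x => approx_facts (a := a) B x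
    have hQ0 : ∀ x, 0 ≤ Q x := fun x => (happrox x).1
    have hQle : ∀ x, Q x ≤ X x := fun x => by
      rw [hB]
      exact (happrox x).2.1
    set Db : ℝ := (Fintype.card (Fin n → Fin (2^s)) : ℝ) * ((n:ℝ) * (((2:ℝ) ^ a)⁻¹)) with hDbdef
    have hdiff : ∀ x, X x - Q x ≤ Db := fun x => by
      rw [hB]
      exact (happrox x).2.2
    have hQmem : Q ∈ Qs := by
      rw [hQsdef]
      refine Finset.mem_filter.2 ⟨Finset.mem_image.2 ⟨(roundTbl B a, B.start), Finset.mem_univ _, rfl⟩,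
        hQ0, fun v => (hQle v).trans (hXle v), ?_⟩
      calc ∑ v, Q v ≤ ∑ v, X v := Finset.sum_le_sum (fun v _ => hQle v)
        _ = 1 := hXsum
    set Dtot : ℝ := (2:ℝ)^n * Db with hDtotdef
    have hVcard : (Fintype.card (Fin n → ZMod 2) : ℝ) = (2:ℝ)^n := by
      simp only [Fintype.card_fun, Fintype.card_fin, ZMod.card]
      push_cast
      ring
    have hL1 : ∑ x, (X x - Q x) ≤ Dtot := by
      calc ∑ x, (X x - Q x) ≤ ∑ _x : Fin n → ZMod 2, Db := Finset.sum_le_sum (fun x _ => hdiff x)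
        _ = (Fintype.card (Fin n → ZMod 2) : ℝ) * Db := by
            rw [Finset.sum_const, Finset.card_univ, nsmul_eq_mul]
        _ = Dtot := by rw [hVcard, hDtotdef]
    -- per-point bound
    have hMi0 : (0:ℝ) ≤ (Fintype.card (Fin mnat → ZMod 2) : ℝ)⁻¹ := by positivity
    have hMi1 : (Fintype.card (Fin mnat → ZMod 2) : ℝ)⁻¹ ≤ 1 := by
      rw [inv_le_one_iff₀]
      right
      rw [hWcard]
      exact one_le_pow₀ (by norm_num)
    have hpoint : ∀ b, |pushforward X g b - (Fintype.card (Fin mnat → ZMod 2) : ℝ)⁻¹|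
        ≤ t + 2 * Dtot := by
      intro b
      have hZ := hg Q hQmem b
      have hpush : pushforward X g b
          = ∑ v, X v * (@ite ℝ (g v = b) (Classical.propDecidable _) (1:ℝ) 0) := by
        rw [pushforward]
        exact Finset.sum_congr rfl fun v _ => by split <;> ring
      rw [hpush]
      exact point_bound X Q (fun v => @ite ℝ (g v = b) (Classical.propDecidable _) (1:ℝ) 0) _ t Dtot
        (fun v => by split <;> norm_num)
        (fun v => by split <;> norm_num)
        hQle hQ0 hXsum hL1 hMi0 hMi1 hZ
    -- conclude
    rw [statDist]
    apply ciSup_le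
    intro S
    have huni : ∀ b, uniformDist (Fin mnat → ZMod 2) b
        = (Fintype.card (Fin mnat → ZMod 2) : ℝ)⁻¹ := fun b => rfl
    calc |∑ b ∈ S, (pushforward X g b - uniformDist (Fin mnat → ZMod 2) b)|
        ≤ ∑ b ∈ S, |pushforward X g b - uniformDist (Fin mnat → ZMod 2) b| :=
          Finset.abs_sum_le_sum_abs _ _
      _ ≤ ∑ b : Fin mnat → ZMod 2, |pushforward X g b - uniformDist (Fin mnat → ZMod 2) b| :=
          Finset.sum_le_sum_of_subset_of_nonneg (Finset.subset_univ _)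
            (fun _ _ _ => abs_nonneg _)
      _ ≤ ∑ _b : Fin mnat → ZMod 2, (t + 2 * Dtot) := by
          refine Finset.sum_le_sum fun b _ => ?_
          rw [huni b]
          exact hpoint b
      _ = (Fintype.card (Fin mnat → ZMod 2) : ℝ) * (t + 2 * Dtot) := by
          rw [Finset.sum_const, Finset.card_univ, nsmul_eq_mul]
      _ ≤ ε := ?_
    -- final numeric bound
    rw [hWcard, mul_add]
    have hhalf1 : (2:ℝ)^mnat * t = ε / 2 := by
      rw [htdef]
      field_simp
    have hPathcard : (Fintype.card (Fin n → Fin (2^s)) : ℝ) = (2:ℝ) ^ (s*n) := by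
      simp only [Fintype.card_fun, Fintype.card_fin]
      rw [← pow_mul]
      push_cast
      ring
    have hhalf2 : (2:ℝ)^mnat * (2 * Dtot) ≤ ε / 2 := by
      have hform : (2:ℝ)^mnat * (2 * Dtot)
          = ((2:ℝ) ^ mnat) * (2 * (((2:ℝ) ^ n) * (((2:ℝ) ^ (s*n)) * ((n:ℝ) * (((2:ℝ) ^ a)⁻¹))))) := by
        rw [hDtotdef, hDbdef, hPathcard]
      rw [hform, hεdef, ha_def]
      exact tail_small hn hmn_nat hNCn
    linarith
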